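/- Potential well depth formula: with Λ = inf_{u≠0} ∫_V(|∇u|²+au²)dμ / (∫_V|u|^{p+1}dμ)^{2/(p+1)}, the depth r = inf{ J(u) : u ≢ 0, N(u) = 0 } satisfies r = ((p-1)/(2(p+1))) Λ^{(p+1)/(p-1)}, and r is attained by some nonzero u with N(u) = 0. -/

import Mathlib

open Finset Real

noncomputable section

/-- A finite weighted graph: positive vertex measure `mu`, symmetric nonnegative
edge weights `w` (an edge `x ∼ y` is present iff `0 < w x y`). -/
structure WGraph (V : Type*) [Fintype V] where
  mu : V → ℝ
  w : V → V → ℝ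
  mu_pos : ∀ x, 0 < mu x
  w_symm : ∀ x y, w x y = w y x
  w_nonneg : ∀ x y, 0 ≤ w x y

variable {V : Type*} [Fintype V]

/-- Integration on the graph: `∫_V f dμ = Σ_x μ(x) f(x)`. -/
def WGraph.integral (G : WGraph V) (f : V → ℝ) : ℝ := ∑ x, G.mu x * f x

/-- The μ-Laplacian: `Δu(x) = (1/μ(x)) Σ_y ω_{xy}(u(y)-u(x))`. -/
def WGraph.lap (G : WGraph V) (u : V → ℝ) (x : V) : ℝ :=
  (∑ y, G.w x y * (u y - u x)) / G.mu x

/-- Discrete Dirichlet pairing `∫_V ∇u∇v dμ = (1/2)Σ_xΣ_y ω_{xy}(u(y)-u(x))(v(y)-v(x))`. -/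
def WGraph.dirichlet (G : WGraph V) (u v : V → ℝ) : ℝ :=
  (1 / 2) * ∑ x, ∑ y, G.w x y * (u y - u x) * (v y - v x)

/-- Connectedness: any two vertices are joined by a finite chain of edges. -/
def WGraph.Connected (G : WGraph V) : Prop :=
  ∀ x y : V, Relation.ReflTransGen (fun a b => 0 < G.w a b) x y

/-- `‖u‖²_{1,a} = ∫_V (|∇u|² + a u²) dμ`. -/
def WGraph.norm1aSq (G : WGraph V) (a : V → ℝ) (u : V → ℝ) : ℝ :=
  G.dirichlet u u + G.integral (fun x => a x * u x ^ 2)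

/-- The first eigenvalue `λ_a` of `-Δ + a`, as the infimum of the Rayleigh quotient. -/
noncomputable def rayleighInf (G : WGraph V) (a : V → ℝ) : ℝ :=
  sInf {r : ℝ | ∃ u : V → ℝ, u ≠ 0 ∧
    r = G.norm1aSq a u / G.integral (fun x => u x ^ 2)}

/-- The energy functional `J(u) = (1/2)∫(|∇u|²+au²)dμ - (1/(p+1))∫|u|^{p+1}dμ`. -/
noncomputable def WGraph.J (G : WGraph V) (a : V → ℝ) (p : ℝ) (u : V → ℝ) : ℝ :=
  (1/2) * G.norm1aSq a u - (1/(p+1)) * G.integral (fun x => |u x| ^ (p+1))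

/-- The Nehari functional `N(u) = ∫(|∇u|²+au²)dμ - ∫|u|^{p+1}dμ`. -/
noncomputable def WGraph.nehari (G : WGraph V) (a : V → ℝ) (p : ℝ) (u : V → ℝ) : ℝ :=
  G.norm1aSq a u - G.integral (fun x => |u x| ^ (p+1))

/-- The Sobolev-type constant `Λ`. -/
noncomputable def sobolevInf (G : WGraph V) (a : V → ℝ) (p : ℝ) : ℝ :=
  sInf {r : ℝ | ∃ u : V → ℝ, u ≠ 0 ∧
    r = G.norm1aSq a u / (G.integral (fun x => |u x| ^ (p+1))) ^ (2/(p+1))}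

/-- The depth `r` of the potential well. -/
noncomputable def wellDepth (G : WGraph V) (a : V → ℝ) (p : ℝ) : ℝ :=
  sInf {r : ℝ | ∃ u : V → ℝ, u ≠ 0 ∧ G.nehari a p u = 0 ∧ r = G.J a p u}


namespace WGraph

lemma dirichlet_self_nonneg (G : WGraph V) (u : V → ℝ) : 0 ≤ G.dirichlet u u := by
  unfold dirichlet
  have h : ∀ x ∈ (univ : Finset V), (0:ℝ) ≤ ∑ y, G.w x y * (u y - u x) * (u y - u x) := by
    intro x _
    refine Finset.sum_nonneg fun y _ => ?_
    have := G.w_nonneg x y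
    nlinarith [sq_nonneg (u y - u x)]
  have := Finset.sum_nonneg h
  linarith

lemma integral_nonneg' (G : WGraph V) {f : V → ℝ} (hf : ∀ x, 0 ≤ f x) : 0 ≤ G.integral f :=
  Finset.sum_nonneg fun x _ => mul_nonneg (G.mu_pos x).le (hf x)

lemma norm1aSq_nonneg (G : WGraph V) {a : V → ℝ} (ha : ∀ x, 0 ≤ a x) (u : V → ℝ) :
    0 ≤ G.norm1aSq a u :=
  add_nonneg (G.dirichlet_self_nonneg u)
    (G.integral_nonneg' fun x => mul_nonneg (ha x) (sq_nonneg _))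

lemma norm1aSq_pos (G : WGraph V) (hconn : G.Connected) {a : V → ℝ} (ha : ∀ x, 0 ≤ a x)
    (ha0 : a ≠ 0) {u : V → ℝ} (hu : u ≠ 0) : 0 < G.norm1aSq a u := by
  rcases (G.norm1aSq_nonneg ha u).lt_or_eq with h | h
  · exact h
  exfalso
  have h1 := G.dirichlet_self_nonneg u
  have h2 := G.integral_nonneg' (f := fun x => a x * u x ^ 2)
    fun x => mul_nonneg (ha x) (sq_nonneg _)
  have hd1 : G.dirichlet u u = 0 := by unfold norm1aSq at h; linarith
  have hd2 : G.integral (fun x => a x * u x ^ 2) = 0 := by unfold norm1aSq at h; linarith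
  have hedge : ∀ x y, 0 < G.w x y → u x = u y := by
    intro x y hw
    have hsum : ∑ x, ∑ y, G.w x y * (u y - u x) * (u y - u x) = 0 := by
      unfold dirichlet at hd1; linarith
    have hn1 : ∀ i ∈ (univ : Finset V), (0:ℝ) ≤ ∑ j, G.w i j * (u j - u i) * (u j - u i) :=
      fun i _ => Finset.sum_nonneg fun j _ => by
        have := G.w_nonneg i j; nlinarith [sq_nonneg (u j - u i)]
    have hx := (Finset.sum_eq_zero_iff_of_nonneg hn1).mp hsum x (mem_univ x)
    have hn2 : ∀ j ∈ (univ : Finset V), (0:ℝ) ≤ G.w x j * (u j - u x) * (u j - u x) :=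
      fun j _ => by have := G.w_nonneg x j; nlinarith [sq_nonneg (u j - u x)]
    have hxy := (Finset.sum_eq_zero_iff_of_nonneg hn2).mp hx y (mem_univ y)
    by_contra hne
    have hd : u y - u x ≠ 0 := sub_ne_zero.mpr (Ne.symm hne)
    have : 0 < G.w x y * ((u y - u x) * (u y - u x)) := mul_pos hw (mul_self_pos.mpr hd)
    rw [mul_assoc] at hxy
    linarith
  have hchain : ∀ x y : V, u x = u y := by
    intro x y
    induction hconn x y with
    | refl => rfl
    | tail _ hw ih => exact ih.trans (hedge _ _ hw)
  obtain ⟨x₀, hx₀⟩ := Function.ne_iff.mp ha0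
  simp only [Pi.zero_apply] at hx₀
  have hterm : ∀ i ∈ (univ : Finset V), (0:ℝ) ≤ G.mu i * (a i * u i ^ 2) :=
    fun i _ => mul_nonneg (G.mu_pos i).le (mul_nonneg (ha i) (sq_nonneg _))
  have h0 := (Finset.sum_eq_zero_iff_of_nonneg hterm).mp hd2 x₀ (mem_univ x₀)
  have hu0 : u x₀ = 0 := by
    rcases mul_eq_zero.mp h0 with h | h
    · exact absurd h (G.mu_pos x₀).ne'
    rcases mul_eq_zero.mp h with h | h
    · exact absurd h hx₀
    · exact pow_eq_zero_iff (by norm_num) |>.mp h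
  exact hu (funext fun y => (hchain y x₀).trans hu0)

lemma integral_abs_rpow_pos (G : WGraph V) {q : ℝ} {u : V → ℝ} (hu : u ≠ 0) :
    0 < G.integral (fun x => |u x| ^ q) := by
  obtain ⟨x₀, hx₀⟩ := Function.ne_iff.mp hu
  simp only [Pi.zero_apply] at hx₀
  refine Finset.sum_pos'
    (fun x _ => mul_nonneg (G.mu_pos x).le (Real.rpow_nonneg (abs_nonneg _) _))
    ⟨x₀, Finset.mem_univ _, ?_⟩
  exact mul_pos (G.mu_pos x₀) (Real.rpow_pos_of_pos (abs_pos.mpr hx₀) _)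

lemma norm1aSq_smul (G : WGraph V) (a : V → ℝ) (t : ℝ) (u : V → ℝ) :
    G.norm1aSq a (fun x => t * u x) = t ^ 2 * G.norm1aSq a u := by
  unfold norm1aSq dirichlet integral
  simp only [Finset.mul_sum, mul_add]
  congr 1
  · exact Finset.sum_congr rfl fun x _ => Finset.sum_congr rfl fun y _ => by ring
  · exact Finset.sum_congr rfl fun x _ => by ring

lemma integral_abs_rpow_smul (G : WGraph V) (q : ℝ) (t : ℝ) (u : V → ℝ) :
    G.integral (fun x => |t * u x| ^ q) = |t| ^ q * G.integral (fun x => |u x| ^ q) := by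
  unfold integral
  simp only [Finset.mul_sum]
  refine Finset.sum_congr rfl fun x _ => ?_
  rw [abs_mul, Real.mul_rpow (abs_nonneg _) (abs_nonneg _)]
  ring

lemma continuous_norm1aSq (G : WGraph V) (a : V → ℝ) :
    Continuous fun u : V → ℝ => G.norm1aSq a u := by
  unfold norm1aSq dirichlet integral
  fun_prop

end WGraph

/-- The Rayleigh-type quotient for the Sobolev constant. -/
noncomputable def Qf (G : WGraph V) (a : V → ℝ) (p : ℝ) (u : V → ℝ) : ℝ :=
  G.norm1aSq a u / (G.integral (fun x => |u x| ^ (p+1))) ^ (2/(p+1))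

lemma Qf_smul (G : WGraph V) (a : V → ℝ) {p t : ℝ} (hp : 1 < p) (ht : 0 < t) (u : V → ℝ) :
    Qf G a p (fun x => t * u x) = Qf G a p u := by
  have hp1 : p + 1 ≠ 0 := by positivity
  unfold Qf
  rw [G.norm1aSq_smul, G.integral_abs_rpow_smul,
    Real.mul_rpow (Real.rpow_nonneg (abs_nonneg t) _)
      (G.integral_nonneg' fun x => Real.rpow_nonneg (abs_nonneg _) _),
    ← Real.rpow_mul (abs_nonneg t)]
  have he : (p + 1) * (2 / (p + 1)) = ((2:ℕ):ℝ) := by field_simp; norm_num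
  rw [he, Real.rpow_natCast, sq_abs]
  have ht2 : t ^ 2 ≠ 0 := by positivity
  rw [mul_div_mul_left _ _ ht2]

/-- potential well depth formula
`r = ((p-1)/(2(p+1))) Λ^{(p+1)/(p-1)}`, and `r` is attained on the Nehari manifold. -/
theorem well_depth_formula {V : Type*} [Fintype V] [Nonempty V]
    (G : WGraph V) (hconn : G.Connected) (p : ℝ) (hp : 1 < p)
    (a : V → ℝ) (ha : ∀ x, 0 ≤ a x) (ha0 : a ≠ 0) :
    wellDepth G a p =
      ((p - 1) / (2 * (p + 1))) * sobolevInf G a p ^ ((p + 1) / (p - 1)) ∧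
    ∃ u : V → ℝ, u ≠ 0 ∧ G.nehari a p u = 0 ∧ G.J a p u = wellDepth G a p := by
  classical
  have hp1 : (0:ℝ) < p + 1 := by linarith
  have hp1' : p + 1 ≠ 0 := ne_of_gt hp1
  have hpm : (0:ℝ) < p - 1 := by linarith
  have hpm' : p - 1 ≠ 0 := ne_of_gt hpm
  have hInonneg : ∀ u : V → ℝ, 0 ≤ G.integral (fun x => |u x| ^ (p+1)) :=
    fun u => G.integral_nonneg' fun x => Real.rpow_nonneg (abs_nonneg _) _
  -- continuity of Qf on the unit sphere
  have hQcont : ContinuousOn (Qf G a p) (Metric.sphere (0 : V → ℝ) 1) := by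
    apply ContinuousOn.div (G.continuous_norm1aSq a).continuousOn
    · refine Continuous.continuousOn ?_
      refine Continuous.rpow_const ?_ fun u => Or.inr (by positivity)
      unfold WGraph.integral
      refine continuous_finset_sum _ fun x _ => ?_
      exact continuous_const.mul
        (((continuous_apply x).abs).rpow_const fun u => Or.inr hp1.le)
    · intro u hu
      have hu0 : u ≠ 0 := by
        intro h
        rw [mem_sphere_zero_iff_norm, h, norm_zero] at hu
        norm_num at hu
      exact ne_of_gt (Real.rpow_pos_of_pos (G.integral_abs_rpow_pos hu0) _)
  obtain ⟨u₀, hu₀s, hmin⟩ := (isCompact_sphere (0 : V → ℝ) 1).exists_isMinOn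
    (NormedSpace.sphere_nonempty.mpr zero_le_one) hQcont
  have hu₀ : u₀ ≠ 0 := by
    intro h
    rw [mem_sphere_zero_iff_norm, h, norm_zero] at hu₀s
    norm_num at hu₀s
  -- Qf u₀ is a lower bound over all nonzero u
  have hlb : ∀ u : V → ℝ, u ≠ 0 → Qf G a p u₀ ≤ Qf G a p u := by
    intro u hu
    have hn : (0:ℝ) < ‖u‖ := norm_pos_iff.mpr hu
    have hmem : (‖u‖⁻¹ • u) ∈ Metric.sphere (0 : V → ℝ) 1 := by
      rw [mem_sphere_zero_iff_norm, norm_smul, norm_inv, norm_norm, inv_mul_cancel₀ hn.ne']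
    have h1 : Qf G a p u₀ ≤ Qf G a p (‖u‖⁻¹ • u) := isMinOn_iff.mp hmin _ hmem
    have h2 : Qf G a p (‖u‖⁻¹ • u) = Qf G a p u := by
      have he : (‖u‖⁻¹ • u) = fun x => ‖u‖⁻¹ * u x := rfl
      rw [he, Qf_smul G a hp (inv_pos.mpr hn) u]
    linarith
  -- the Sobolev constant equals Qf u₀
  have hΛ : sobolevInf G a p = Qf G a p u₀ := by
    unfold sobolevInf
    apply le_antisymm
    · exact csInf_le ⟨Qf G a p u₀, by rintro r ⟨u, hu, rfl⟩; exact hlb u hu⟩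
        ⟨u₀, hu₀, rfl⟩
    · exact le_csInf ⟨_, u₀, hu₀, rfl⟩ (by rintro r ⟨u, hu, rfl⟩; exact hlb u hu)
  have hΛpos : 0 < sobolevInf G a p := by
    rw [hΛ]
    exact div_pos (G.norm1aSq_pos hconn ha ha0 hu₀)
      (Real.rpow_pos_of_pos (G.integral_abs_rpow_pos hu₀) _)
  -- key facts about Nehari points
  have hkey : ∀ v : V → ℝ, v ≠ 0 → G.nehari a p v = 0 →
      G.J a p v = ((p-1)/(2*(p+1))) * G.norm1aSq a v ∧
      (Qf G a p v) ^ ((p+1)/(p-1)) = G.norm1aSq a v := by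
    intro v hv hN
    have hsI : G.norm1aSq a v = G.integral (fun x => |v x| ^ (p+1)) := by
      unfold WGraph.nehari at hN; linarith
    have hs : 0 < G.norm1aSq a v := G.norm1aSq_pos hconn ha ha0 hv
    constructor
    · unfold WGraph.J
      rw [← hsI]
      field_simp
      ring
    · have hQv : Qf G a p v = (G.norm1aSq a v) ^ ((p-1)/(p+1)) := by
        unfold Qf
        rw [← hsI]
        rw [show G.norm1aSq a v / (G.norm1aSq a v) ^ ((2:ℝ)/(p+1))
            = (G.norm1aSq a v) ^ ((1:ℝ)) / (G.norm1aSq a v) ^ ((2:ℝ)/(p+1)) by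
          rw [Real.rpow_one], ← Real.rpow_sub hs]
        congr 1
        field_simp
        ring
      rw [hQv, ← Real.rpow_mul hs.le]
      rw [show (p-1)/(p+1) * ((p+1)/(p-1)) = 1 by field_simp, Real.rpow_one]
  -- the minimizing Nehari element
  set s₀ := G.norm1aSq a u₀ with hs₀def
  set I₀ := G.integral (fun x => |u₀ x| ^ (p+1)) with hI₀def
  have hs₀ : 0 < s₀ := G.norm1aSq_pos hconn ha ha0 hu₀
  have hI₀ : 0 < I₀ := G.integral_abs_rpow_pos hu₀
  set t₀ := (s₀ / I₀) ^ ((1:ℝ)/(p-1)) with ht₀def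
  have ht₀ : 0 < t₀ := Real.rpow_pos_of_pos (div_pos hs₀ hI₀) _
  set v₀ : V → ℝ := fun x => t₀ * u₀ x with hv₀def
  have hv₀ : v₀ ≠ 0 := by
    intro h
    apply hu₀
    funext x
    have := congrFun h x
    simp only [hv₀def, Pi.zero_apply] at this
    have := mul_eq_zero.mp this
    rcases this with h' | h'
    · exact absurd h' ht₀.ne'
    · simpa using h'
  have ht₀pow : t₀ ^ (p - 1) = s₀ / I₀ := by
    rw [ht₀def, ← Real.rpow_mul (div_pos hs₀ hI₀).le, one_div_mul_cancel hpm', Real.rpow_one]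
  have hI₀ne : I₀ ≠ 0 := hI₀.ne'
  have hNv₀ : G.nehari a p v₀ = 0 := by
    unfold WGraph.nehari
    rw [hv₀def, G.norm1aSq_smul, G.integral_abs_rpow_smul, abs_of_pos ht₀]
    rw [← hs₀def, ← hI₀def]
    have ht : t₀ ^ (p + 1) = (s₀ / I₀) * t₀ ^ 2 := by
      rw [show p + 1 = (p - 1) + ((2:ℕ):ℝ) by push_cast; ring,
        Real.rpow_add ht₀, Real.rpow_natCast, ht₀pow]
    rw [ht]
    field_simp
    ring
  have hQv₀ : Qf G a p v₀ = sobolevInf G a p := by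
    rw [hv₀def, Qf_smul G a hp ht₀ u₀, hΛ]
  obtain ⟨hJv₀, hsv₀⟩ := hkey v₀ hv₀ hNv₀
  have hJval : G.J a p v₀ = ((p-1)/(2*(p+1))) * sobolevInf G a p ^ ((p+1)/(p-1)) := by
    rw [hJv₀, ← hsv₀, hQv₀]
  -- lower bound for the well depth set
  have hlbW : ∀ r ∈ {r : ℝ | ∃ u : V → ℝ, u ≠ 0 ∧ G.nehari a p u = 0 ∧ r = G.J a p u},
      ((p-1)/(2*(p+1))) * sobolevInf G a p ^ ((p+1)/(p-1)) ≤ r := by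
    rintro r ⟨u, hu, hN, rfl⟩
    obtain ⟨hJu, hsu⟩ := hkey u hu hN
    rw [hJu]
    have hc : (0:ℝ) ≤ (p-1)/(2*(p+1)) := by positivity
    refine mul_le_mul_of_nonneg_left ?_ hc
    calc sobolevInf G a p ^ ((p+1)/(p-1))
        ≤ (Qf G a p u) ^ ((p+1)/(p-1)) := by
          refine Real.rpow_le_rpow hΛpos.le ?_ (by positivity)
          rw [hΛ]; exact hlb u hu
      _ = G.norm1aSq a u := hsu
  have hmemW : ((p-1)/(2*(p+1))) * sobolevInf G a p ^ ((p+1)/(p-1)) ∈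
      {r : ℝ | ∃ u : V → ℝ, u ≠ 0 ∧ G.nehari a p u = 0 ∧ r = G.J a p u} :=
    ⟨v₀, hv₀, hNv₀, hJval.symm⟩
  have hwd : wellDepth G a p = ((p-1)/(2*(p+1))) * sobolevInf G a p ^ ((p+1)/(p-1)) := by
    unfold wellDepth
    exact le_antisymm (csInf_le ⟨_, hlbW⟩ hmemW) (le_csInf ⟨_, hmemW⟩ hlbW)
  exact ⟨hwd, v₀, hv₀, hNv₀, by rw [hJval, hwd]⟩
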